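/- Let H be a finite graph and σ a capacity function on H. Let P = v_0 v_1 … v_k be a path in H with σ(e) = (4,1) for every edge e of P, such that every internal vertex of P has degree 3 in H and σ(e) ⊆ (1,4) for every edge e not on P incident to an internal vertex of P. If H contains an edge joining two internal vertices of P whose distance along P is even (so that this edge together with edges of P forms an odd cycle), then H admits no σ-faithful flow, i.e. there is no modular 5-flow f on H with f(e) ∈ σ(e) for every edge e of H. -/
import Mathlib


open scoped Classical

/-- A finite multigraph: finite vertex and edge types together with a reference
orientation recorded by source and target maps.  The underlying undirected graph
is obtained by forgetting the directions; reorienting an edge corresponds to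
negating the value of a flow on it. -/
structure Multigraph where
  V : Type
  E : Type
  [fintypeV : Fintype V]
  [fintypeE : Fintype E]
  src : E → V
  tgt : E → V

attribute [instance] Multigraph.fintypeV Multigraph.fintypeE

namespace Multigraph

/-- `f` is a flow with respect to the reference orientation: at every vertex the
sum of the values on incoming edges equals the sum on outgoing edges. -/
def IsFlow (G : Multigraph) {M : Type*} [AddCommMonoid M] (f : G.E → M) : Prop :=
  ∀ v : G.V, (∑ e : G.E, Set.indicator {e' : G.E | G.tgt e' = v} f e)
           = ∑ e : G.E, Set.indicator {e' : G.E | G.src e' = v} f e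

/-- The edge `e` joins the vertices `v` and `w` (in either direction). -/
def Joins (G : Multigraph) (e : G.E) (v w : G.V) : Prop :=
  (G.src e = v ∧ G.tgt e = w) ∨ (G.src e = w ∧ G.tgt e = v)

/-- `v` and `w` are adjacent: some edge joins them. -/
def Adj (G : Multigraph) (v w : G.V) : Prop := ∃ e : G.E, G.Joins e v w

/-- The degree of a vertex (loops count twice). -/
noncomputable def degree (G : Multigraph) (v : G.V) : ℕ :=
  Nat.card {e : G.E // G.src e = v} + Nat.card {e : G.E // G.tgt e = v}

/-- A set of edges is an even subgraph if every vertex is incident with an even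
number of its edges (loops counting twice). -/
def IsEvenSubgraph (G : Multigraph) (J : Set G.E) : Prop :=
  ∀ v : G.V, Even (Nat.card {e : G.E // e ∈ J ∧ G.src e = v}
    + Nat.card {e : G.E // e ∈ J ∧ G.tgt e = v})

/-- `G` has a circular nowhere-zero `r`-flow: for some orientation (encoded by
possibly negating values with respect to the reference orientation) there is a
real-valued flow with all values in `[1, r-1]`. -/
def HasCNZF (G : Multigraph) (r : ℝ) : Prop :=
  ∃ f : G.E → ℝ, G.IsFlow f ∧
    ∀ e : G.E, f e ∈ Set.Icc 1 (r - 1) ∨ -f e ∈ Set.Icc 1 (r - 1)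

/-- The circular flow number `Φ_c(G)`, as an extended real (`⊤` if no `r`-CNZF
exists for any `r ≥ 2`). -/
noncomputable def flowNumber (G : Multigraph) : EReal :=
  sInf {x : EReal | ∃ r : ℝ, x = (r : EReal) ∧ 2 ≤ r ∧ G.HasCNZF r}

/-- `G` has a modular circular nowhere-zero `r`-flow: a flow with values in
`ℝ/rℤ` lying (up to reorientation) in the image of `[1, r-1]`. -/
def HasMCNZF (G : Multigraph) (r : ℝ) : Prop :=
  ∃ f : G.E → AddCircle r, G.IsFlow f ∧
    ∀ e : G.E, f e ∈ (fun t : ℝ => (t : AddCircle r)) '' Set.Icc 1 (r - 1) ∨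
      -f e ∈ (fun t : ℝ => (t : AddCircle r)) '' Set.Icc 1 (r - 1)

/-- `G` has a sub-`r`-MCNZF: an `r`-MCNZF all of whose values lie in the image
of the open interval `(1, r-1)`. -/
def HasSubMCNZF (G : Multigraph) (r : ℝ) : Prop :=
  ∃ f : G.E → AddCircle r, G.IsFlow f ∧
    ∀ e : G.E, f e ∈ (fun t : ℝ => (t : AddCircle r)) '' Set.Ioo 1 (r - 1) ∨
      -f e ∈ (fun t : ℝ => (t : AddCircle r)) '' Set.Ioo 1 (r - 1)

end Multigraph

/-- The right endpoint representative: the representative of `b` in `(a, a+5]`. -/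
def arcEnd (a b : ℤ) : ℤ := a + (if (b - a) % 5 = 0 then 5 else (b - a) % 5)

/-- The open integer arc `(a, b)` in `ℝ/5ℤ`: the image of the real interval
`(a, b')` where `b'` is the representative of `b` in `(a, a+5]`. -/
def arc (a b : ℤ) : Set (AddCircle (5 : ℝ)) :=
  (fun t : ℝ => (t : AddCircle (5 : ℝ))) '' Set.Ioo (a : ℝ) (arcEnd a b : ℝ)

/-- `SI_5`: the symmetric subsets of `ℝ/5ℤ` that are unions of open integer arcs. -/
def SI5 : Set (Set (AddCircle (5 : ℝ))) :=
  {A | (∀ z, z ∈ A ↔ -z ∈ A) ∧ ∃ s : Set (ℤ × ℤ), A = ⋃ p ∈ s, arc p.1 p.2}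

/-- The measure `Me A`: the number of (distinct) open unit arcs contained in `A`. -/
noncomputable def Me (A : Set (AddCircle (5 : ℝ))) : ℕ :=
  Set.ncard {B : Set (AddCircle (5 : ℝ)) | B ⊆ A ∧ ∃ k : ℤ, B = arc k (k + 1)}

namespace Multigraph

/-- `G⁺_{xy}`: the graph `G` with one extra edge `e⁺` from `x` to `y`. -/
def addEdge (G : Multigraph) (x y : G.V) : Multigraph where
  V := G.V
  E := Option G.E
  src := fun e => e.elim x G.src
  tgt := fun e => e.elim y G.tgt

/-- The open 5-capacity of the generalised edge `G_{xy}`: all values that can pass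
from `x` to `y` through `G` by a modular 5-flow of `G⁺_{xy}` whose values on the
edges of `G` lie in the open arc `(1,4)`. -/
def CP5 (G : Multigraph) (x y : G.V) : Set (AddCircle (5 : ℝ)) :=
  {w | ∃ f : Option G.E → AddCircle (5 : ℝ),
    (G.addEdge x y).IsFlow f ∧ (∀ e : G.E, f (some e) ∈ arc 1 4) ∧ f none = w}

/-- `G` has a sub-5-MCNZF: a modular 5-flow with all values in the open arc `(1,4)`. -/
def HasSub5 (G : Multigraph) : Prop :=
  ∃ f : G.E → AddCircle (5 : ℝ), G.IsFlow f ∧ ∀ e : G.E, f e ∈ arc 1 4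

/-- `G` has a `σ`-faithful flow: a modular 5-flow `f` with `f e ∈ σ e` for all `e`. -/
def HasFaithful (G : Multigraph) (σ : G.E → Set (AddCircle (5 : ℝ))) : Prop :=
  ∃ f : G.E → AddCircle (5 : ℝ), G.IsFlow f ∧ ∀ e : G.E, f e ∈ σ e

/-- `G` has a `σ_{J,A}`-faithful flow: a modular 5-flow with values in `A` on the
edges of `J` and in the open arc `(1,4)` on all other edges. -/
def HasFaithfulOn (G : Multigraph) (J : Set G.E) (A : Set (AddCircle (5 : ℝ))) : Prop :=
  ∃ f : G.E → AddCircle (5 : ℝ), G.IsFlow f ∧ (∀ e ∈ J, f e ∈ A) ∧ ∀ e ∉ J, f e ∈ arc 1 4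

end Multigraph

/-- Cyclic successor on `Fin n`. -/
def rot (n : ℕ) (i : Fin n) : Fin n := ⟨(i.val + 1) % n, Nat.mod_lt _ i.pos⟩

/-- The wheel `W_n`: the external cycle `v_1 … v_n` (vertices `some i`, rim edges
`Sum.inl i` from `v_i` to `v_{i+1}`) together with a hub `v_c = none` joined to
every rim vertex by the spokes `Sum.inr i`. -/
def wheel (n : ℕ) : Multigraph where
  V := Option (Fin n)
  E := Fin n ⊕ Fin n
  src := fun e => match e with
    | Sum.inl i => some i
    | Sum.inr _ => none
  tgt := fun e => match e with
    | Sum.inl i => some (rot n i)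
    | Sum.inr i => some i

section Aux

lemma coe_eq_coe5 {x y : ℝ} :
    ((x : AddCircle (5:ℝ)) = (y : AddCircle (5:ℝ))) ↔ ∃ n : ℤ, y = x + 5 * n := by
  rw [QuotientAddGroup.eq_iff_sub_mem]
  constructor
  · rintro h
    obtain ⟨n, hn⟩ := AddSubgroup.mem_zmultiples_iff.1 h
    exact ⟨-n, by push_cast [zsmul_eq_mul] at hn ⊢; linarith⟩
  · rintro ⟨n, rfl⟩
    exact AddSubgroup.mem_zmultiples_iff.2 ⟨-n, by push_cast [zsmul_eq_mul]; ring⟩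

lemma coe5_neg (x : ℝ) : ((-x : ℝ) : AddCircle (5:ℝ)) = -((x : ℝ) : AddCircle (5:ℝ)) := rfl

lemma coe5_sub (x y : ℝ) : ((x - y : ℝ) : AddCircle (5:ℝ)) =
    ((x : ℝ) : AddCircle (5:ℝ)) - ((y : ℝ) : AddCircle (5:ℝ)) := rfl

lemma key_real {a b c : ℝ} (ha : a ∈ Set.Ioo (-1:ℝ) 1) (hb : b ∈ Set.Ioo (-1:ℝ) 1)
    (hc : c ∈ Set.Ioo (1:ℝ) 4)
    (h : (((a - b : ℝ)) : AddCircle (5:ℝ)) = (c : ℝ) ∨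
         (((a - b : ℝ)) : AddCircle (5:ℝ)) = ((-c : ℝ) : AddCircle (5:ℝ))) :
    (0 < a ∧ b < 0 ∧ 1 < a - b) ∨ (a < 0 ∧ 0 < b ∧ a - b < -1) := by
  obtain ⟨ha1, ha2⟩ := ha; obtain ⟨hb1, hb2⟩ := hb; obtain ⟨hc1, hc2⟩ := hc
  have H : ∃ n : ℤ, a - b = c + 5 * n ∨ a - b = -c + 5 * n := by
    rcases h with h | h
    · obtain ⟨n, hn⟩ := coe_eq_coe5.1 h.symm
      exact ⟨n, Or.inl (by linarith)⟩
    · obtain ⟨n, hn⟩ := coe_eq_coe5.1 h.symm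
      exact ⟨n, Or.inr (by linarith)⟩
  obtain ⟨n, hn⟩ := H
  have hn' : n = 0 ∨ n = -1 ∨ n = 1 := by
    have h1 : (-7:ℝ) < 5 * (n:ℝ) := by rcases hn with h | h <;> linarith
    have h2 : 5 * (n:ℝ) < 7 := by rcases hn with h | h <;> linarith
    have h1' : (-7:ℤ) < 5 * n := by exact_mod_cast h1
    have h2' : (5:ℤ) * n < 7 := by exact_mod_cast h2
    omega
  rcases hn' with rfl | rfl | rfl <;> rcases hn with h | h <;> push_cast at h <;>
    [ (left; refine ⟨by linarith, by linarith, by linarith⟩);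
      (right; refine ⟨by linarith, by linarith, by linarith⟩);
      (right; refine ⟨by linarith, by linarith, by linarith⟩);
      (right; refine ⟨by linarith, by linarith, by linarith⟩);
      (left; refine ⟨by linarith, by linarith, by linarith⟩);
      (left; refine ⟨by linarith, by linarith, by linarith⟩)]

lemma lift_eq5 {x y : ℝ} (hx : x ∈ Set.Ioo (-2:ℝ) 2) (hy : y ∈ Set.Ioo (-2:ℝ) 2)
    (h : ((x : ℝ) : AddCircle (5:ℝ)) = (y : ℝ)) : x = y := by
  obtain ⟨n, hn⟩ := coe_eq_coe5.1 h
  have h1 : (-4:ℝ) < 5 * (n:ℝ) := by linarith [hx.1, hx.2, hy.1, hy.2]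
  have h2 : 5 * (n:ℝ) < 4 := by linarith [hx.1, hx.2, hy.1, hy.2]
  have h1' : (-4:ℤ) < 5 * n := by exact_mod_cast h1
  have h2' : (5:ℤ) * n < 4 := by exact_mod_cast h2
  have : n = 0 := by omega
  simp [this] at hn; linarith

lemma mem_arc41 {x : AddCircle (5:ℝ)} :
    x ∈ arc 4 1 ↔ ∃ t ∈ Set.Ioo (-1:ℝ) 1, (t : AddCircle (5:ℝ)) = x := by
  have he : arcEnd 4 1 = 6 := by decide
  constructor
  · rintro ⟨t, ht, rfl⟩
    rw [he] at ht
    refine ⟨t - 5, ⟨by push_cast at ht; constructor <;> [skip; skip] <;> cases ht <;> linarith, ?_⟩⟩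
    · exact coe_eq_coe5.2 ⟨1, by ring⟩
  · rintro ⟨t, ht, rfl⟩
    exact ⟨t + 5, by rw [he]; push_cast; constructor <;> [linarith [ht.1]; linarith [ht.2]],
      (coe_eq_coe5.2 ⟨1, by push_cast; ring⟩).symm⟩

lemma mem_arc14 {x : AddCircle (5:ℝ)} :
    x ∈ arc 1 4 ↔ ∃ t ∈ Set.Ioo (1:ℝ) 4, (t : AddCircle (5:ℝ)) = x := by
  have he : arcEnd 1 4 = 4 := by decide
  constructor
  · rintro ⟨t, ht, rfl⟩; rw [he] at ht; exact ⟨t, by push_cast at ht; exact ht, rfl⟩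
  · rintro ⟨t, ht, rfl⟩; exact ⟨t, by rw [he]; push_cast; exact ht, rfl⟩

namespace Multigraph

noncomputable def gval (G : Multigraph) (f : G.E → AddCircle (5:ℝ)) (v : G.V) (e : G.E) :
    AddCircle (5:ℝ) :=
  (if G.src e = v then f e else 0) - (if G.tgt e = v then f e else 0)

noncomputable def cnt (G : Multigraph) (v : G.V) (e : G.E) : ℕ :=
  (if G.src e = v then 1 else 0) + (if G.tgt e = v then 1 else 0)

lemma degree_eq_sum (G : Multigraph) (v : G.V) : G.degree v = ∑ e, G.cnt v e := by
  unfold degree cnt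
  rw [Finset.sum_add_distrib]
  congr 1 <;>
  · rw [Nat.card_eq_fintype_card, Fintype.card_subtype, Finset.card_filter]

lemma gval_eq_zero (G : Multigraph) (f : G.E → AddCircle (5:ℝ)) (v : G.V) (e : G.E)
    (h : G.cnt v e = 0) : G.gval f v e = 0 := by
  unfold cnt at h
  unfold gval
  split_ifs at h ⊢ <;> simp_all

lemma sum_gval (G : Multigraph) (f : G.E → AddCircle (5:ℝ)) (hf : G.IsFlow f) (v : G.V) :
    ∑ e, G.gval f v e = 0 := by
  have h := hf v
  unfold gval
  rw [Finset.sum_sub_distrib]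
  rw [sub_eq_zero]
  have e1 : ∀ (w : G.V), (∑ e : G.E, Set.indicator {e' : G.E | G.src e' = w} f e)
      = ∑ e : G.E, if G.src e = w then f e else 0 :=
    fun w => Finset.sum_congr rfl (fun e _ => by rw [Set.indicator_apply]; simp)
  have e2 : ∀ (w : G.V), (∑ e : G.E, Set.indicator {e' : G.E | G.tgt e' = w} f e)
      = ∑ e : G.E, if G.tgt e = w then f e else 0 :=
    fun w => Finset.sum_congr rfl (fun e _ => by rw [Set.indicator_apply]; simp)
  rw [← e1, ← e2]
  exact h.symm

lemma three_edge (G : Multigraph) (f : G.E → AddCircle (5:ℝ)) (hf : G.IsFlow f)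
    (v : G.V) (hdeg : G.degree v = 3) (a b : G.E) (hab : a ≠ b)
    (hca : G.cnt v a = 1) (hcb : G.cnt v b = 1) :
    ∃ e', e' ≠ a ∧ e' ≠ b ∧ G.cnt v e' = 1 ∧
      (∀ e, e ≠ a → e ≠ b → e ≠ e' → G.cnt v e = 0) ∧
      G.gval f v a + G.gval f v b + G.gval f v e' = 0 := by
  classical
  have hsum : ∑ e, G.cnt v e = 3 := by rw [← degree_eq_sum]; exact hdeg
  set s : Finset G.E := (Finset.univ.erase a).erase b with hs
  have hbmem : b ∈ Finset.univ.erase a := Finset.mem_erase.2 ⟨hab.symm, Finset.mem_univ b⟩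
  have hsplit : G.cnt v a + (G.cnt v b + ∑ e ∈ s, G.cnt v e) = 3 := by
    rw [Finset.add_sum_erase _ _ hbmem, Finset.add_sum_erase _ _ (Finset.mem_univ a)]
    exact hsum
  have hrest : ∑ e ∈ s, G.cnt v e = 1 := by omega
  have hex : ∃ e' ∈ s, G.cnt v e' ≠ 0 := by
    by_contra h
    push_neg at h
    rw [Finset.sum_eq_zero (fun e he => by simpa using h e he)] at hrest
    omega
  obtain ⟨e', he's, he'⟩ := hex
  have hle : G.cnt v e' ≤ 1 := hrest ▸ Finset.single_le_sum (fun _ _ => Nat.zero_le _) he's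
  have hc1 : G.cnt v e' = 1 := by omega
  have hzero : ∀ e, e ≠ a → e ≠ b → e ≠ e' → G.cnt v e = 0 := by
    intro e hea heb hee
    have hes : e ∈ s.erase e' := Finset.mem_erase.2 ⟨hee,
      Finset.mem_erase.2 ⟨heb, Finset.mem_erase.2 ⟨hea, Finset.mem_univ e⟩⟩⟩
    have : G.cnt v e' + ∑ x ∈ s.erase e', G.cnt v x = 1 := by
      rw [Finset.add_sum_erase _ _ he's]; exact hrest
    have hz : ∑ x ∈ s.erase e', G.cnt v x = 0 := by omega
    exact Finset.sum_eq_zero_iff.1 hz e hes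
  refine ⟨e', (Finset.mem_erase.1 (Finset.mem_erase.1 he's).2).1,
    (Finset.mem_erase.1 he's).1, hc1, hzero, ?_⟩
  have h0 := sum_gval G f hf v
  have he'2 : e' ∈ (Finset.univ.erase a).erase b := he's
  rw [← Finset.add_sum_erase _ _ (Finset.mem_univ a),
      ← Finset.add_sum_erase _ _ hbmem,
      ← Finset.add_sum_erase _ _ he'2] at h0
  have hz2 : ∑ x ∈ s.erase e', G.gval f v x = 0 :=
    Finset.sum_eq_zero (fun x hx => by
      have hmem := Finset.mem_erase.1 hx
      have hmem2 := Finset.mem_erase.1 hmem.2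
      have hmem3 := Finset.mem_erase.1 hmem2.2
      exact gval_eq_zero G f v x (hzero x hmem3.1 hmem2.1 hmem.1))
  rw [hz2] at h0
  linear_combination (norm := abel) h0

end Multigraph

end Aux

section PathAux

namespace Multigraph

variable {H : Multigraph} {k : ℕ} {p : Fin (k + 1) → H.V} {pe : Fin k → H.E}

lemma path_ends (hp : Function.Injective p)
    (hpe : ∀ i : Fin k, H.Joins (pe i) (p i.castSucc) (p i.succ))
    (m : Fin k) (w : Fin (k+1))
    (hw : H.src (pe m) = p w ∨ H.tgt (pe m) = p w) :
    w.val = m.val ∨ w.val = m.val + 1 := by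
  rcases hpe m with ⟨h1, h2⟩ | ⟨h1, h2⟩ <;> rcases hw with hw | hw
  · left; have h := hp (h1.symm.trans hw); rw [← h]; simp
  · right; have h := hp (h2.symm.trans hw); rw [← h]; simp
  · right; have h := hp (h1.symm.trans hw); rw [← h]; simp
  · left; have h := hp (h2.symm.trans hw); rw [← h]; simp

lemma path_ne_cs (hp : Function.Injective p) (m : Fin k) :
    p m.castSucc ≠ p m.succ := by
  intro h
  have := hp h
  have h2 := congrArg Fin.val this
  simp at h2

lemma path_cnt_cs (hp : Function.Injective p)
    (hpe : ∀ i : Fin k, H.Joins (pe i) (p i.castSucc) (p i.succ)) (m : Fin k) :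
    H.cnt (p m.castSucc) (pe m) = 1 := by
  rcases hpe m with ⟨h1, h2⟩ | ⟨h1, h2⟩ <;> unfold Multigraph.cnt <;> rw [h1, h2] <;>
    simp [path_ne_cs hp m, (path_ne_cs hp m).symm]

lemma path_cnt_succ (hp : Function.Injective p)
    (hpe : ∀ i : Fin k, H.Joins (pe i) (p i.castSucc) (p i.succ)) (m : Fin k) :
    H.cnt (p m.succ) (pe m) = 1 := by
  rcases hpe m with ⟨h1, h2⟩ | ⟨h1, h2⟩ <;> unfold Multigraph.cnt <;> rw [h1, h2] <;>
    simp [path_ne_cs hp m, (path_ne_cs hp m).symm]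

lemma path_gval_cs (f : H.E → AddCircle (5:ℝ)) (hp : Function.Injective p)
    (hpe : ∀ i : Fin k, H.Joins (pe i) (p i.castSucc) (p i.succ)) (m : Fin k) :
    H.gval f (p m.castSucc) (pe m) =
      (if H.src (pe m) = p m.castSucc then f (pe m) else -(f (pe m))) := by
  rcases hpe m with ⟨h1, h2⟩ | ⟨h1, h2⟩ <;> unfold Multigraph.gval <;> rw [h1, h2] <;>
    simp [path_ne_cs hp m, (path_ne_cs hp m).symm]

lemma path_gval_succ (f : H.E → AddCircle (5:ℝ)) (hp : Function.Injective p)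
    (hpe : ∀ i : Fin k, H.Joins (pe i) (p i.castSucc) (p i.succ)) (m : Fin k) :
    H.gval f (p m.succ) (pe m) =
      -(if H.src (pe m) = p m.castSucc then f (pe m) else -(f (pe m))) := by
  rcases hpe m with ⟨h1, h2⟩ | ⟨h1, h2⟩ <;> unfold Multigraph.gval <;> rw [h1, h2] <;>
    simp [path_ne_cs hp m, (path_ne_cs hp m).symm]

lemma vertexEq (σ : H.E → Set (AddCircle (5:ℝ)))
    (hp : Function.Injective p)
    (hpe : ∀ i : Fin k, H.Joins (pe i) (p i.castSucc) (p i.succ))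
    (f : H.E → AddCircle (5:ℝ)) (hflow : H.IsFlow f) (hfσ : ∀ e, f e ∈ σ e)
    (u : Fin k → AddCircle (5:ℝ))
    (hu : ∀ m, u m = if H.src (pe m) = p m.castSucc then f (pe m) else -(f (pe m)))
    (n : ℕ) (h0 : 0 < n) (hk' : n < k) (hn1 : n - 1 < k) (hnk1 : n < k + 1)
    (hdeg3 : H.degree (p ⟨n, hnk1⟩) = 3)
    (hoffn : ∀ e : H.E, e ∉ Set.range pe →
      (H.src e = p ⟨n, hnk1⟩ ∨ H.tgt e = p ⟨n, hnk1⟩) → σ e ⊆ arc 1 4) :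
    ∃ e' : H.E, e' ≠ pe ⟨n-1, hn1⟩ ∧ e' ≠ pe ⟨n, hk'⟩ ∧
      (∀ e, e ≠ pe ⟨n-1, hn1⟩ → e ≠ pe ⟨n, hk'⟩ → e ≠ e' → H.cnt (p ⟨n, hnk1⟩) e = 0) ∧
      f e' ∈ arc 1 4 ∧
      ((H.src e' = p ⟨n, hnk1⟩ ∧ u ⟨n-1, hn1⟩ - u ⟨n, hk'⟩ = f e') ∨
       (H.tgt e' = p ⟨n, hnk1⟩ ∧ u ⟨n-1, hn1⟩ - u ⟨n, hk'⟩ = -(f e'))) := by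
  set m1 : Fin k := ⟨n-1, hn1⟩ with hm1
  set m2 : Fin k := ⟨n, hk'⟩ with hm2
  set v : H.V := p ⟨n, hnk1⟩ with hv
  have hm1succ : m1.succ = (⟨n, hnk1⟩ : Fin (k+1)) := Fin.ext (by simp [hm1]; omega)
  have hm2cs : m2.castSucc = (⟨n, hnk1⟩ : Fin (k+1)) := Fin.ext (by simp [hm2])
  have hab : pe m1 ≠ pe m2 := by
    intro h
    have h1 : H.src (pe m2) = p m1.castSucc ∨ H.tgt (pe m2) = p m1.castSucc := by
      rcases hpe m1 with ⟨ha, _⟩ | ⟨_, hb⟩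
      · left; rw [← h]; exact ha
      · right; rw [← h]; exact hb
    have := path_ends hp hpe m2 m1.castSucc h1
    simp [hm1, hm2] at this
    omega
  have hca : H.cnt v (pe m1) = 1 := by
    rw [hv, ← hm1succ]; exact path_cnt_succ hp hpe m1
  have hcb : H.cnt v (pe m2) = 1 := by
    rw [hv, ← hm2cs]; exact path_cnt_cs hp hpe m2
  obtain ⟨e', he'a, he'b, hc1, hzero, heq⟩ :=
    Multigraph.three_edge H f hflow v hdeg3 (pe m1) (pe m2) hab hca hcb
  have hinc : (H.src e' = v ∧ ¬ H.tgt e' = v) ∨ (¬ H.src e' = v ∧ H.tgt e' = v) := by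
    by_cases hs : H.src e' = v <;> by_cases ht2 : H.tgt e' = v
    · exfalso; unfold Multigraph.cnt at hc1; rw [if_pos hs, if_pos ht2] at hc1; omega
    · exact Or.inl ⟨hs, ht2⟩
    · exact Or.inr ⟨hs, ht2⟩
    · exfalso; unfold Multigraph.cnt at hc1; rw [if_neg hs, if_neg ht2] at hc1; omega
  have hnr : e' ∉ Set.range pe := by
    rintro ⟨l, rfl⟩
    have hst : H.src (pe l) = p ⟨n, hnk1⟩ ∨ H.tgt (pe l) = p ⟨n, hnk1⟩ := by
      rcases hinc with ⟨h, _⟩ | ⟨_, h⟩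
      · exact Or.inl h
      · exact Or.inr h
    have hl : n = l.val ∨ n = l.val + 1 := path_ends hp hpe l ⟨n, hnk1⟩ hst
    rcases hl with hl | hl
    · exact he'b (congrArg pe (Fin.ext (show l.val = m2.val by simp [hm2]; omega)))
    · exact he'a (congrArg pe (Fin.ext (show l.val = m1.val by simp [hm1]; omega)))
  have hfa : f e' ∈ arc 1 4 := by
    refine hoffn e' hnr ?_ (hfσ e')
    rcases hinc with ⟨h, _⟩ | ⟨_, h⟩
    · exact Or.inl h
    · exact Or.inr h
  have hg1 : H.gval f v (pe m1) = -(u m1) := by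
    rw [hv, ← hm1succ, path_gval_succ f hp hpe m1, ← hu m1]
  have hg2 : H.gval f v (pe m2) = u m2 := by
    rw [hv, ← hm2cs, path_gval_cs f hp hpe m2, ← hu m2]
  refine ⟨e', he'a, he'b, hzero, hfa, ?_⟩
  rcases hinc with ⟨hsv, htv⟩ | ⟨hsv, htv⟩
  · left
    refine ⟨hsv, ?_⟩
    have hge : H.gval f v e' = f e' := by
      unfold Multigraph.gval
      rw [if_pos hsv, if_neg htv, sub_zero]
    have key : u m1 - u m2 - f e' =
        -(H.gval f v (pe m1) + H.gval f v (pe m2) + H.gval f v e') := by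
      rw [hge, hg1, hg2]; abel
    rw [heq, neg_zero] at key
    exact sub_eq_zero.1 key
  · right
    refine ⟨htv, ?_⟩
    have hge : H.gval f v e' = -(f e') := by
      unfold Multigraph.gval
      rw [if_neg hsv, if_pos htv, zero_sub]
    have key : u m1 - u m2 - (-(f e')) =
        -(H.gval f v (pe m1) + H.gval f v (pe m2) + H.gval f v e') := by
      rw [hge, hg1, hg2]; abel
    rw [heq, neg_zero] at key
    exact sub_eq_zero.1 key

end Multigraph

end PathAux

/-- let `P = v_0 … v_k` be a path of `(4,1)`-edges in `H` whose
internal vertices all have degree 3 in `H`, such that every edge not on `P`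
incident with an internal vertex has capacity contained in `(1,4)`.  If some edge
of `H` joins two internal vertices of `P` at even distance along `P`, then `H`
has no `σ`-faithful flow. -/
theorem path_even_chord_no_faithful (H : Multigraph)
    (σ : H.E → Set (AddCircle (5 : ℝ)))
    (hσsym : ∀ (e : H.E) (z : AddCircle (5 : ℝ)), z ∈ σ e ↔ -z ∈ σ e)
    (k : ℕ) (p : Fin (k + 1) → H.V) (pe : Fin k → H.E)
    (hp : Function.Injective p)
    (hpe : ∀ i : Fin k, H.Joins (pe i) (p i.castSucc) (p i.succ))
    (hσP : ∀ i : Fin k, σ (pe i) = arc 4 1)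
    (hdeg : ∀ i : Fin (k + 1), 0 < i.val → i.val < k → H.degree (p i) = 3)
    (hoff : ∀ i : Fin (k + 1), 0 < i.val → i.val < k → ∀ e : H.E,
      e ∉ Set.range pe → (H.src e = p i ∨ H.tgt e = p i) → σ e ⊆ arc 1 4)
    (i j : Fin (k + 1)) (hi : 0 < i.val) (hik : i.val < k)
    (hj : 0 < j.val) (hjk : j.val < k) (hij : i ≠ j)
    (heven : Even (Nat.dist i.val j.val))
    (e₀ : H.E) (he₀ : H.Joins e₀ (p i) (p j)) :
    ¬ H.HasFaithful σ := by
  rintro ⟨f, hflow, hfσ⟩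
  have hpne : ∀ (x y : Fin (k+1)), x.val ≠ y.val → p x ≠ p y := by
    intro x y hxy h
    exact hxy (congrArg Fin.val (hp h))
  -- the oriented flow values along the path
  obtain ⟨u, hu⟩ : ∃ u : Fin k → AddCircle (5:ℝ), ∀ m,
      u m = if H.src (pe m) = p m.castSucc then f (pe m) else -(f (pe m)) := ⟨_, fun m => rfl⟩
  -- lifts of the u values to (-1,1)
  have hex_t : ∀ m : Fin k, ∃ r : ℝ, r ∈ Set.Ioo (-1:ℝ) 1 ∧ (r : AddCircle (5:ℝ)) = u m := by
    intro m
    have hm : f (pe m) ∈ arc 4 1 := by rw [← hσP m]; exact hfσ (pe m)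
    obtain ⟨s, hs, hcoe⟩ := mem_arc41.1 hm
    rw [hu m]
    by_cases hsrc : H.src (pe m) = p m.castSucc
    · exact ⟨s, hs, by rw [if_pos hsrc]; exact hcoe⟩
    · refine ⟨-s, ⟨by linarith [hs.2], by linarith [hs.1]⟩, ?_⟩
      rw [if_neg hsrc, ← hcoe, ← coe5_neg]
  choose tt htIoo htcoe using hex_t
  obtain ⟨t', ht'⟩ : ∃ t' : ℕ → ℝ, ∀ n (h : n < k), t' n = tt ⟨n, h⟩ :=
    ⟨fun n => if h : n < k then tt ⟨n, h⟩ else 0, fun n h => dif_pos h⟩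
  have hti : ∀ n (h : n < k), t' n ∈ Set.Ioo (-1:ℝ) 1 := fun n h => (ht' n h) ▸ htIoo ⟨n, h⟩
  have htc : ∀ n (h : n < k), ((t' n : ℝ) : AddCircle (5:ℝ)) = u ⟨n, h⟩ := by
    intro n h; rw [ht' n h]; exact htcoe ⟨n, h⟩
  -- vertex equations
  have vEq : ∀ (n : ℕ) (h0 : 0 < n) (hk' : n < k) (hn1 : n - 1 < k) (hnk1 : n < k + 1),
      ∃ e' : H.E, e' ≠ pe ⟨n-1, hn1⟩ ∧ e' ≠ pe ⟨n, hk'⟩ ∧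
      (∀ e, e ≠ pe ⟨n-1, hn1⟩ → e ≠ pe ⟨n, hk'⟩ → e ≠ e' → H.cnt (p ⟨n, hnk1⟩) e = 0) ∧
      f e' ∈ arc 1 4 ∧
      ((H.src e' = p ⟨n, hnk1⟩ ∧ u ⟨n-1, hn1⟩ - u ⟨n, hk'⟩ = f e') ∨
       (H.tgt e' = p ⟨n, hnk1⟩ ∧ u ⟨n-1, hn1⟩ - u ⟨n, hk'⟩ = -(f e'))) := by
    intro n h0 hk' hn1 hnk1
    exact Multigraph.vertexEq σ hp hpe f hflow hfσ u hu n h0 hk' hn1 hnk1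
      (hdeg ⟨n, hnk1⟩ h0 hk')
      (fun e hnr hinc => hoff ⟨n, hnk1⟩ h0 hk' e hnr hinc)
  -- sign alternation at every internal vertex
  have ALT : ∀ n : ℕ, 0 < n → n < k →
      (0 < t' (n-1) ∧ t' n < 0 ∧ 1 < t' (n-1) - t' n) ∨
      (t' (n-1) < 0 ∧ 0 < t' n ∧ t' (n-1) - t' n < -1) := by
    intro n h0 hk'
    obtain ⟨e', _, _, _, hfa, hcase⟩ := vEq n h0 hk' (by omega) (by omega)
    obtain ⟨c, hc, hcoec⟩ := mem_arc14.1 hfa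
    have hn1 : n - 1 < k := by omega
    apply key_real (hti _ hn1) (hti _ hk') hc
    have hu1 := htc _ hn1
    have hu2 := htc _ hk'
    rcases hcase with ⟨_, hE⟩ | ⟨_, hE⟩
    · left
      rw [coe5_sub, hu1, hu2, hE, hcoec]
    · right
      rw [coe5_sub, hu1, hu2, hE, coe5_neg, hcoec]
  -- alternating sign chain
  have chain : ∀ d a : ℕ, a + d < k → (0 < t' (a+d) ↔ (Even d ↔ 0 < t' a)) := by
    intro d
    induction d with
    | zero => intro a h; simp
    | succ d ih =>
      intro a h
      have h' : a + d < k := by omega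
      have hv := ALT (a+d+1) (by omega) (by omega)
      simp only [Nat.add_sub_cancel] at hv
      have hiff : 0 < t' (a+d+1) ↔ ¬ (0 < t' (a+d)) := by
        rcases hv with ⟨h1, h2, _⟩ | ⟨h1, h2, _⟩ <;> constructor <;> intro hx <;> linarith
      have hih := ih a h'
      rw [show a + (d+1) = a+d+1 by omega, hiff, hih, Nat.even_add_one]
      tauto
  have final : ∀ a b : ℕ, a < b → b < k → ¬ Even (b-a) → 0 < t' a → 0 < t' b → False := by
    intro a b hab hbk hodd ha hb
    have hc := chain (b-a) a (by omega)
    rw [show a + (b-a) = b by omega] at hc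
    tauto
  -- e₀ is not a path edge
  have hvalne : i.val ≠ j.val := fun h => hij (Fin.ext h)
  obtain ⟨w, hw⟩ := heven
  have hdist : i.val - j.val + (j.val - i.val) = w + w := by
    unfold Nat.dist at hw
    exact hw
  have he₀nr : e₀ ∉ Set.range pe := by
    rintro ⟨l, rfl⟩
    have d1 : i.val = l.val ∨ i.val = l.val + 1 := by
      apply Multigraph.path_ends hp hpe l i
      rcases he₀ with ⟨h1, _⟩ | ⟨_, h2⟩
      · exact Or.inl h1
      · exact Or.inr h2
    have d2 : j.val = l.val ∨ j.val = l.val + 1 := by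
      apply Multigraph.path_ends hp hpe l j
      rcases he₀ with ⟨_, h2⟩ | ⟨h1, _⟩
      · exact Or.inr h2
      · exact Or.inl h1
    omega
  -- identify the third edge at vertex i and at vertex j with e₀
  have hident : ∀ (n : Fin (k+1)) (h0 : 0 < n.val) (hk' : n.val < k) (hn1 : n.val - 1 < k),
      (H.src e₀ = p n ∨ H.tgt e₀ = p n) →
      ((H.src e₀ = p n ∧ u ⟨n.val-1, hn1⟩ - u ⟨n.val, hk'⟩ = f e₀) ∨
       (H.tgt e₀ = p n ∧ u ⟨n.val-1, hn1⟩ - u ⟨n.val, hk'⟩ = -(f e₀))) := by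
    intro n h0 hk' hn1 hincn
    obtain ⟨e', he'a, he'b, hzero, hfa, hcase⟩ := vEq n.val h0 hk' hn1 n.isLt
    have hn : (⟨n.val, n.isLt⟩ : Fin (k+1)) = n := Fin.ext rfl
    rw [hn] at hzero hcase
    have he₀e' : e₀ = e' := by
      by_contra hne
      have hz := hzero e₀ (fun h => he₀nr (h ▸ Set.mem_range_self _))
        (fun h => he₀nr (h ▸ Set.mem_range_self _)) hne
      unfold Multigraph.cnt at hz
      rcases hincn with h | h <;> rw [h] at hz <;> simp at hz
    rw [← he₀e'] at hcase
    exact hcase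
  -- the two linked vertex equations
  have hi1 : i.val - 1 < k := by omega
  have hj1 : j.val - 1 < k := by omega
  have hIJ : u ⟨i.val-1, hi1⟩ - u ⟨i.val, hik⟩ =
      -(u ⟨j.val-1, hj1⟩ - u ⟨j.val, hjk⟩) := by
    have hi' := hident i hi hik hi1
    have hj' := hident j hj hjk hj1
    have hpij : p i ≠ p j := hpne i j hvalne
    rcases he₀ with ⟨hs₀, ht₀⟩ | ⟨hs₀, ht₀⟩
    · have hic := hi' (Or.inl hs₀)
      have hjc := hj' (Or.inr ht₀)
      rcases hic with ⟨_, hE1⟩ | ⟨hbad, _⟩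
      · rcases hjc with ⟨hbad, _⟩ | ⟨_, hE2⟩
        · exact absurd (hs₀.symm.trans hbad) hpij
        · rw [hE1, hE2]; abel
      · exact absurd (ht₀.symm.trans hbad) hpij.symm
    · have hic := hi' (Or.inr ht₀)
      have hjc := hj' (Or.inl hs₀)
      rcases hic with ⟨hbad, _⟩ | ⟨_, hE1⟩
      · exact absurd (hs₀.symm.trans hbad) hpij.symm
      · rcases hjc with ⟨_, hE2⟩ | ⟨hbad, _⟩
        · rw [hE1, hE2]
        · exact absurd (ht₀.symm.trans hbad) hpij
  -- transfer to the real lifts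
  have EQ : t' (i.val-1) - t' i.val = t' j.val - t' (j.val-1) := by
    apply lift_eq5
    · have h1 := hti _ hi1; have h2 := hti _ hik
      exact ⟨by linarith [h1.1, h2.2], by linarith [h1.2, h2.1]⟩
    · have h1 := hti _ hjk; have h2 := hti _ hj1
      exact ⟨by linarith [h1.1, h2.2], by linarith [h1.2, h2.1]⟩
    · rw [coe5_sub, coe5_sub, htc _ hi1, htc _ hik, htc _ hjk, htc _ hj1, hIJ]
      abel
  -- contradiction via the alternating chain
  have KRi := ALT i.val hi hik
  have KRj := ALT j.val hj hjk
  rcases KRi with ⟨hA, hB, hM⟩ | ⟨hA, hB, hM⟩ <;> rcases KRj with ⟨hC, hD, hN⟩ | ⟨hC, hD, hN⟩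
  · linarith
  · -- 0 < t' (i.val-1) and 0 < t' j.val
    rcases Nat.lt_or_ge (i.val-1) j.val with hlt | hge
    · exact final (i.val-1) j.val hlt hjk (by rintro ⟨w2, hw2⟩; omega) hA hD
    · exact final j.val (i.val-1) (by omega) hi1 (by rintro ⟨w2, hw2⟩; omega) hD hA
  · -- 0 < t' i.val and 0 < t' (j.val-1)
    rcases Nat.lt_or_ge i.val (j.val-1) with hlt | hge
    · exact final i.val (j.val-1) hlt hj1 (by rintro ⟨w2, hw2⟩; omega) hB hC
    · exact final (j.val-1) i.val (by omega) hik (by rintro ⟨w2, hw2⟩; omega) hC hB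
  · linarith
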